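/- Let α ∈ S_n satisfy condition (*), and let β ∈ S_{n+1} with Ψ_n(β) = α (i.e., β = [α, j] for some 0 ≤ j ≤ n in the cut-and-reconnect construction). Then β satisfies condition (*) if and only if j = 0 or j is a vertex in the chain of Q̂_α (equivalently, j lies in the cycle of α containing 1, or j = 0). -/

import Mathlib

/-- Two subsets of `{0, ..., m-1}` cross if there are `a < b < c < d` with
`a, c` in the first and `b, d` in the second. -/
def Crossing {m : ℕ} (A B : Set (Fin m)) : Prop :=
  ∃ a b c d : Fin m, a < b ∧ b < c ∧ c < d ∧ a ∈ A ∧ c ∈ A ∧ b ∈ B ∧ d ∈ B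

/-- Condition (*): every (nontrivial) cycle of the functional graph of `α`
(arrows `i → α i`) has exactly one ascent arrow (source smaller than target), and the
orbits of `α` (cycles, counting fixed points) are pairwise non-crossing. -/
def SatisfiesStar {m : ℕ} (α : Equiv.Perm (Fin m)) : Prop :=
  (∀ c ∈ α.cycleFactorsFinset, (c.support.filter fun i => i < c i).card = 1) ∧
  ∀ x y : Fin m, ¬ α.SameCycle x y →
    ¬ Crossing {z | α.SameCycle x z} {z | α.SameCycle y z}

/-- Number of cycles of `α`, counting fixed points as 1-cycles. -/
def cycleCount {m : ℕ} (α : Equiv.Perm (Fin m)) : ℕ :=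
  Multiset.card α.cycleType + (Finset.univ.filter fun x => α x = x).card

/-- Extension of `α ∈ S_m` to `S_{m+1}` fixing the new top element `Fin.last m`. -/
def liftPerm {m : ℕ} (α : Equiv.Perm (Fin m)) : Equiv.Perm (Fin (m + 1)) :=
  finSuccEquivLast.symm.permCongr α.optionCongr

/-- The "Case 0" construction `[α, 0]`: extend the chain of `Q̂_α` by a new arrow at the
top (here `0` plays the role of the paper's distinguished element `1`, and
`Fin.last m` the role of the new element `n+1`): the resulting permutation sends
`0 ↦ last`, `last ↦ α 0`, and agrees with `α` elsewhere. -/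
def chainExt {m : ℕ} (α : Equiv.Perm (Fin m)) : Equiv.Perm (Fin (m + 1)) :=
  liftPerm α * Equiv.swap 0 (Fin.last m)

/-- The cut-and-reconnect construction `[α, j]`: `insPerm α none = [α, 0]` (Case 0),
and for a target `j` of `Q̂_α`, `insPerm α (some j)` cuts the arrow `i → j` of `Q̂_α`
and reconnects via new arrows (virtual vertex) `→ j` and `i →` (new top vertex). -/
def insPerm {m : ℕ} (α : Equiv.Perm (Fin m)) : Option (Fin m) → Equiv.Perm (Fin (m + 1))
  | none => chainExt α
  | some j => Equiv.swap (Fin.last m) j.castSucc * chainExt α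

open Equiv Equiv.Perm Finset

lemma liftPerm_castSucc {m : ℕ} (α : Perm (Fin m)) (i : Fin m) :
    liftPerm α i.castSucc = (α i).castSucc := by
  simp [liftPerm, Equiv.permCongr_apply]

lemma liftPerm_last {m : ℕ} (α : Perm (Fin m)) :
    liftPerm α (Fin.last m) = Fin.last m := by
  simp [liftPerm, Equiv.permCongr_apply]

lemma chainExt_zero {m : ℕ} (α : Perm (Fin (m+1))) :
    chainExt α 0 = Fin.last (m+1) := by
  simp [chainExt, Equiv.swap_apply_left, liftPerm_last]

lemma chainExt_last {m : ℕ} (α : Perm (Fin (m+1))) :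
    chainExt α (Fin.last (m+1)) = (α 0).castSucc := by
  have h0 : ((0 : Fin (m+1)).castSucc) = (0 : Fin (m+2)) := by simp
  simp only [chainExt, Perm.mul_apply, Equiv.swap_apply_right]
  rw [← h0, liftPerm_castSucc]

lemma chainExt_castSucc {m : ℕ} (α : Perm (Fin (m+1))) {i : Fin (m+1)} (hi : i ≠ 0) :
    chainExt α i.castSucc = (α i).castSucc := by
  have h1 : i.castSucc ≠ 0 := by simpa using hi
  have h2 : i.castSucc ≠ Fin.last (m+1) := (Fin.castSucc_lt_last i).ne
  simp only [chainExt, Perm.mul_apply, Equiv.swap_apply_of_ne_of_ne h1 h2, liftPerm_castSucc]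

lemma insS_zero {m : ℕ} (α : Perm (Fin (m+1))) (j : Fin (m+1)) :
    insPerm α (some j) 0 = j.castSucc := by
  simp [insPerm, chainExt_zero, Equiv.swap_apply_left]

lemma insS_last_eq {m : ℕ} (α : Perm (Fin (m+1))) {j : Fin (m+1)} (h : α 0 = j) :
    insPerm α (some j) (Fin.last (m+1)) = Fin.last (m+1) := by
  simp [insPerm, chainExt_last, h, Equiv.swap_apply_right]

lemma insS_last_ne {m : ℕ} (α : Perm (Fin (m+1))) {j : Fin (m+1)} (h : α 0 ≠ j) :
    insPerm α (some j) (Fin.last (m+1)) = (α 0).castSucc := by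
  have h1 : (α 0).castSucc ≠ Fin.last (m+1) := (Fin.castSucc_lt_last _).ne
  have h2 : (α 0).castSucc ≠ j.castSucc := by simpa [Fin.castSucc_inj] using h
  simp [insPerm, chainExt_last, Equiv.swap_apply_of_ne_of_ne h1 h2]

lemma insS_mid {m : ℕ} (α : Perm (Fin (m+1))) {j i : Fin (m+1)} (hi : i ≠ 0) (h : α i ≠ j) :
    insPerm α (some j) i.castSucc = (α i).castSucc := by
  have h1 : (α i).castSucc ≠ Fin.last (m+1) := (Fin.castSucc_lt_last _).ne
  have h2 : (α i).castSucc ≠ j.castSucc := by simpa [Fin.castSucc_inj] using h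
  simp [insPerm, chainExt_castSucc α hi, Equiv.swap_apply_of_ne_of_ne h1 h2]

lemma insS_hit {m : ℕ} (α : Perm (Fin (m+1))) {j i : Fin (m+1)} (hi : i ≠ 0) (h : α i = j) :
    insPerm α (some j) i.castSucc = Fin.last (m+1) := by
  simp [insPerm, chainExt_castSucc α hi, h, Equiv.swap_apply_right]

lemma insN_zero {m : ℕ} (α : Perm (Fin (m+1))) : insPerm α none 0 = Fin.last (m+1) :=
  chainExt_zero α

lemma insN_last {m : ℕ} (α : Perm (Fin (m+1))) :
    insPerm α none (Fin.last (m+1)) = (α 0).castSucc := chainExt_last α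

lemma insN_mid {m : ℕ} (α : Perm (Fin (m+1))) {i : Fin (m+1)} (hi : i ≠ 0) :
    insPerm α none i.castSucc = (α i).castSucc := chainExt_castSucc α hi


-- transport of an invariant predicate along a cycle
lemma sc_closed {N : ℕ} {β : Perm (Fin N)} {P : Fin N → Prop}
    (h : ∀ x, P x → P (β x)) {a b : Fin N} (hab : β.SameCycle a b) (ha : P a) : P b := by
  obtain ⟨i, -, rfl⟩ := hab.exists_pow_eq'
  clear hab
  induction i with
  | zero => simpa using ha
  | succ k ih =>
    rw [pow_succ', Perm.mul_apply]
    exact h _ ih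

lemma sc_fixed {N : ℕ} {β : Perm (Fin N)} {a b : Fin N} (hab : β.SameCycle a b)
    (ha : β a = a) : b = a :=
  (hab.eq_of_left ha).symm

def Star1 {m : ℕ} (α : Perm (Fin m)) : Prop :=
  ∀ i k : Fin m, i < α i → α.SameCycle i k → i ≤ k

lemma star1_min {m : ℕ} {α : Perm (Fin m)} (h1 : Star1 α) {z w : Fin m}
    (hzw : α.SameCycle z w) (hwz : w < z) : α z < z := by
  rcases lt_trichotomy (α z) z with h | h | h
  · exact h
  · exact absurd (sc_fixed hzw h) hwz.ne
  · exact absurd (h1 z w h hzw) (not_le.mpr hwz)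

-- the key "no skip" lemma
lemma no_skip {m : ℕ} {α : Perm (Fin m)} (h1 : Star1 α) {z w : Fin m}
    (hzw : α.SameCycle z w) (hl : α z < w) (hr : w < z) : False := by
  classical
  set U : Finset (Fin m) := univ.filter (fun u => α.SameCycle z u ∧ w ≤ u) with hU
  have memU : ∀ u, u ∈ U ↔ α.SameCycle z u ∧ w ≤ u := by
    intro u; simp [hU]
  set A : Finset (Fin m) := U.image α with hA
  have hcard : A.card = U.card := Finset.card_image_of_injective _ α.injective
  -- |A \ U| = |U \ A|
  have hdiff : (A \ U).card = (U \ A).card := by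
    have h1' : (A \ U).card + (A ∩ U).card = A.card := Finset.card_sdiff_add_card_inter A U
    have h2' : (U \ A).card + (U ∩ A).card = U.card := Finset.card_sdiff_add_card_inter U A
    rw [Finset.inter_comm] at h2'
    omega
  -- U \ A has at most one element
  have hUA : (U \ A).card ≤ 1 := by
    apply Finset.card_le_one.mpr
    intro u hu v hv
    rw [Finset.mem_sdiff] at hu hv
    have hpre : ∀ x, x ∈ U → x ∉ A → α.SameCycle z (α⁻¹ x) ∧ α⁻¹ x < α (α⁻¹ x) := by
      intro x hx hxA
      have hsc : α.SameCycle z x := ((memU x).1 hx).1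
      have hscp : α.SameCycle z (α⁻¹ x) := by
        simpa using hsc
      have hp : α⁻¹ x ∉ U := by
        intro hmem
        exact hxA (Finset.mem_image.mpr ⟨_, hmem, α.apply_symm_apply x⟩)
      have : ¬ w ≤ α⁻¹ x := fun hle => hp ((memU _).mpr ⟨hscp, hle⟩)
      have hlt : α⁻¹ x < w := not_le.mp this
      refine ⟨hscp, ?_⟩
      rw [Perm.coe_inv, α.apply_symm_apply]
      exact lt_of_lt_of_le hlt ((memU x).1 hx).2
    obtain ⟨hu1, hu2⟩ := hpre u hu.1 hu.2
    obtain ⟨hv1, hv2⟩ := hpre v hv.1 hv.2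
    -- both α⁻¹ u and α⁻¹ v are ascent sources in the same cycle, hence both are minima
    have huv : α.SameCycle (α⁻¹ u) (α⁻¹ v) := hu1.symm.trans hv1
    have e1 : α⁻¹ u ≤ α⁻¹ v := h1 _ _ hu2 huv
    have e2 : α⁻¹ v ≤ α⁻¹ u := h1 _ _ hv2 huv.symm
    have : α⁻¹ u = α⁻¹ v := le_antisymm e1 e2
    have := congrArg α this
    rwa [Perm.coe_inv, α.apply_symm_apply, α.apply_symm_apply] at this
  -- but A \ U contains α z and α w, which are distinct
  have hzU : z ∈ U := (memU z).mpr ⟨Equiv.Perm.SameCycle.refl _ _, hr.le⟩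
  have hwU : w ∈ U := (memU w).mpr ⟨hzw, le_refl w⟩
  have hscwaz : α.SameCycle w (α z) :=
    hzw.symm.trans (Equiv.Perm.sameCycle_apply_right.mpr (Equiv.Perm.SameCycle.refl _ _))
  have hawlt : α w < w := star1_min h1 hscwaz hl
  have hazA : α z ∈ A \ U := by
    rw [Finset.mem_sdiff]
    refine ⟨Finset.mem_image_of_mem _ hzU, fun hmem => ?_⟩
    exact absurd ((memU _).1 hmem).2 (not_le.mpr hl)
  have hawA : α w ∈ A \ U := by
    rw [Finset.mem_sdiff]
    refine ⟨Finset.mem_image_of_mem _ hwU, fun hmem => ?_⟩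
    exact absurd ((memU _).1 hmem).2 (not_le.mpr hawlt)
  have hne : α z ≠ α w := fun h => (hr.ne' (α.injective h)).elim
  have : 2 ≤ (A \ U).card := Finset.one_lt_card.mpr ⟨_, hazA, _, hawA, hne⟩
  omega

lemma star_iff {m : ℕ} (α : Perm (Fin m)) :
    SatisfiesStar α ↔ Star1 α ∧ ∀ x y : Fin m, ¬ α.SameCycle x y →
      ¬ Crossing {z | α.SameCycle x z} {z | α.SameCycle y z} := by
  classical
  constructor
  · rintro ⟨h1, h2⟩
    refine ⟨?_, h2⟩
    intro i k hasc hsc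
    by_contra hki
    push_neg at hki
    have hi : i ∈ α.support := mem_support.mpr (ne_of_gt hasc)
    have hc : α.cycleOf i ∈ α.cycleFactorsFinset :=
      (cycleOf_mem_cycleFactorsFinset_iff).mpr hi
    have hcard := h1 _ hc
    set S := (α.cycleOf i).support with hS
    have hSne : S.Nonempty := by
      exact ⟨i, mem_support_cycleOf_iff.mpr ⟨Equiv.Perm.SameCycle.refl _ _, hi⟩⟩
    set M := S.min' hSne with hM
    have hMS : M ∈ S := S.min'_mem hSne
    have hMsc : α.SameCycle i M := (mem_support_cycleOf_iff.mp hMS).1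
    -- i is in the filter
    have hif : i ∈ S.filter (fun u => u < α.cycleOf i u) := by
      rw [Finset.mem_filter]
      refine ⟨mem_support_cycleOf_iff.mpr ⟨Equiv.Perm.SameCycle.refl _ _, hi⟩, ?_⟩
      rw [cycleOf_apply_self]
      exact hasc
    -- M is in the filter
    have hMlt : M < α M := by
      have hMne : α M ≠ M := by
        have : M ∈ α.support := (hMsc.mem_support_iff).mp hi
        exact mem_support.mp this
      have haMS : α M ∈ S := by
        refine mem_support_cycleOf_iff.mpr ⟨?_, hi⟩
        exact hMsc.trans (Equiv.Perm.sameCycle_apply_right.mpr (Equiv.Perm.SameCycle.refl _ _))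
      exact lt_of_le_of_ne (S.min'_le _ haMS) (Ne.symm hMne)
    have hMf : M ∈ S.filter (fun u => u < α.cycleOf i u) := by
      rw [Finset.mem_filter]
      exact ⟨hMS, by rwa [hMsc.cycleOf_apply]⟩
    -- but M ≠ i since M ≤ k < i
    have hki' : M ≤ k := by
      have hkS : k ∈ S := mem_support_cycleOf_iff.mpr ⟨hsc, hi⟩
      exact S.min'_le _ hkS
    have hMi : M ≠ i := ne_of_lt (lt_of_le_of_lt hki' hki)
    obtain ⟨a, ha⟩ := Finset.card_eq_one.mp hcard
    rw [ha, Finset.mem_singleton] at hif hMf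
    exact hMi (hMf.trans hif.symm)
  · rintro ⟨h1, h2⟩
    refine ⟨?_, h2⟩
    intro c hc
    have hcyc := (mem_cycleFactorsFinset_iff.mp hc).1
    have happ := (mem_cycleFactorsFinset_iff.mp hc).2
    have hSne : c.support.Nonempty := hcyc.nonempty_support
    set M := c.support.min' hSne with hM
    have hMS : M ∈ c.support := c.support.min'_mem hSne
    have hMlt : M < c M := by
      have : c M ∈ c.support := apply_mem_support.mpr hMS
      exact lt_of_le_of_ne (c.support.min'_le _ this) (Ne.symm (mem_support.mp hMS))
    rw [Finset.card_eq_one]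
    refine ⟨M, Finset.eq_singleton_iff_unique_mem.mpr ⟨Finset.mem_filter.mpr ⟨hMS, hMlt⟩, ?_⟩⟩
    intro u hu
    rw [Finset.mem_filter] at hu
    obtain ⟨huS, hulemma⟩ := hu
    -- u is an ascent source for α on its orbit; M is in the same α-orbit
    have hceq : c = α.cycleOf u := cycle_is_cycleOf huS hc
    have huM : α.SameCycle u M := by
      have := hceq ▸ hMS
      exact (mem_support_cycleOf_iff.mp this).1
    have huα : u < α u := by rwa [happ u huS] at hulemma
    have h1' : u ≤ M := h1 u M huα huM
    exact le_antisymm h1' (c.support.min'_le _ huS)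

section Helpers
variable {m : ℕ} {α : Equiv.Perm (Fin m)}

lemma orbit_min (α : Perm (Fin m)) (x : Fin m) :
    ∃ M, α.SameCycle x M ∧ ∀ u, α.SameCycle M u → M ≤ u := by
  classical
  set S := univ.filter (fun u => α.SameCycle x u) with hS
  have hne : S.Nonempty := ⟨x, Finset.mem_filter.mpr ⟨Finset.mem_univ _, Equiv.Perm.SameCycle.refl _ _⟩⟩
  refine ⟨S.min' hne, ?_, ?_⟩
  · have := S.min'_mem hne
    simpa [hS] using this
  · intro u hu
    have hxM : α.SameCycle x (S.min' hne) := by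
      have := S.min'_mem hne; simpa [hS] using this
    exact S.min'_le _ (by simp [hS]; exact hxM.trans hu)

lemma sc0_desc [NeZero m] (h1 : Star1 α) {u : Fin m} (hu : α.SameCycle 0 u) (hu0 : u ≠ 0) :
    α u < u :=
  star1_min h1 hu.symm (lt_of_le_of_ne (Fin.zero_le u) (Ne.symm hu0))

lemma alpha0_max (h1 : Star1 α) {u : Fin m} [NeZero m] (hu : α.SameCycle 0 u) : u ≤ α 0 := by
  classical
  set S := univ.filter (fun v => α.SameCycle (0:Fin m) v) with hS
  have hne : S.Nonempty := ⟨0, Finset.mem_filter.mpr ⟨Finset.mem_univ _, Equiv.Perm.SameCycle.refl _ _⟩⟩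
  set Mx := S.max' hne with hMx
  have hMxmem : α.SameCycle 0 Mx := by have := S.max'_mem hne; simpa [hS] using this
  have huMx : u ≤ Mx := S.le_max' _ (by simp [hS]; exact hu)
  rcases eq_or_ne (α Mx) Mx with hfix | hfix
  · have h0 : (0 : Fin m) = Mx := sc_fixed hMxmem.symm hfix
    rw [← h0] at huMx
    exact le_trans huMx (Fin.zero_le _)
  · set p := α⁻¹ Mx with hp
    have hpsc : α.SameCycle 0 p := by
      have : α.SameCycle 0 (α⁻¹ Mx) := Equiv.Perm.sameCycle_symm_apply_right.mpr hMxmem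
      exact this
    have hple : p ≤ Mx := S.le_max' _ (by simp [hS]; exact hpsc)
    have hpne : p ≠ Mx := by
      intro h
      apply hfix
      have := congrArg α h
      rw [hp, Perm.coe_inv, Equiv.apply_symm_apply] at this
      exact this.symm
    have hasc : p < α p := by
      rw [hp, Perm.coe_inv, Equiv.apply_symm_apply]
      exact lt_of_le_of_ne hple hpne
    have hp0 : p ≤ 0 := h1 p 0 hasc hpsc.symm
    have hp0' : p = 0 := le_antisymm hp0 (Fin.zero_le _)
    have : α 0 = Mx := by rw [← hp0', hp, Perm.coe_inv, Equiv.apply_symm_apply]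
    rw [this]
    exact huMx

end Helpers

section Conn
variable {n : ℕ} {α : Equiv.Perm (Fin (n+1))}

lemma conn_rec {β : Equiv.Perm (Fin (n+2))} {M : Fin (n+1)}
    (R : Fin (n+1) → Prop)
    (hdesc : ∀ u, R u → u ≠ M → (R (α u) ∧ α u < u ∧ β u.castSucc = (α u).castSucc)) :
    ∀ u, R u → β.SameCycle M.castSucc u.castSucc := by
  suffices H : ∀ k : ℕ, ∀ u : Fin (n+1), u.val < k → R u → β.SameCycle M.castSucc u.castSucc by
    exact fun u hu => H (u.val + 1) u (Nat.lt_succ_self _) hu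
  intro k
  induction k with
  | zero => intro u hu; omega
  | succ k ih =>
    intro u hk hu
    rcases eq_or_ne u M with rfl | hne
    · exact Equiv.Perm.SameCycle.refl _ _
    · obtain ⟨hR, hlt, hstep⟩ := hdesc u hu hne
      have h1 : β.SameCycle M.castSucc (α u).castSucc :=
        ih (α u) (by have := Fin.lt_iff_val_lt_val.mp hlt; omega) hR
      have h2 : β.SameCycle u.castSucc (α u).castSucc := by
        rw [← hstep]
        exact Equiv.Perm.sameCycle_apply_right.mpr (Equiv.Perm.SameCycle.refl _ _)
      exact h1.trans h2.symm

lemma conn_top (h1 : Star1 α) {j' : Fin (n+1)} (hj : α.SameCycle 0 j') :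
    ∀ u, α.SameCycle 0 u → j' < u →
      (insPerm α (some j')).SameCycle (Fin.last (n+1)) u.castSucc := by
  set β := insPerm α (some j') with hβ
  suffices H : ∀ k : ℕ, ∀ u : Fin (n+1), u.val < k → α.SameCycle 0 u → j' < u →
      β.SameCycle (Fin.last (n+1)) u.castSucc by
    exact fun u hu hju => H (u.val + 1) u (Nat.lt_succ_self _) hu hju
  intro k
  induction k with
  | zero => intro u hu; omega
  | succ k ih =>
    intro u hk hu hju
    have hu0 : u ≠ 0 := fun h => by simp [h] at hju
    rcases eq_or_ne (α u) j' with heq | hne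
    · have : β u.castSucc = Fin.last (n+1) := insS_hit α hu0 heq
      rw [← this]
      exact (Equiv.Perm.sameCycle_apply_right.mpr (Equiv.Perm.SameCycle.refl _ _)).symm
    · have hlt : α u < u := sc0_desc h1 hu hu0
      have hgt : j' < α u := by
        rcases lt_or_ge j' (α u) with h | h
        · exact h
        · exact absurd (no_skip h1 (hu.symm.trans hj) (lt_of_le_of_ne h hne) hju) not_false
      have hsc : α.SameCycle 0 (α u) := hu.trans
        (Equiv.Perm.sameCycle_apply_right.mpr (Equiv.Perm.SameCycle.refl _ _))
      have hrec := ih (α u) (by have := Fin.lt_iff_val_lt_val.mp hlt; omega) hsc hgt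
      have hstep : β u.castSucc = (α u).castSucc := insS_mid α hu0 hne
      refine hrec.trans ?_
      rw [← hstep]
      exact (Equiv.Perm.sameCycle_apply_right.mpr (Equiv.Perm.SameCycle.refl _ _)).symm

end Conn

section Closures
variable {n : ℕ} {α : Equiv.Perm (Fin (n+1))}

lemma scR {N : ℕ} (β : Perm (Fin N)) (x : Fin N) : β.SameCycle x (β x) :=
  Equiv.Perm.sameCycle_apply_right.mpr (Equiv.Perm.SameCycle.refl _ _)

lemma cloN_chain (h1 : Star1 α) :
    ∀ w, (insPerm α none).SameCycle (Fin.last (n+1)) w →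
      w = Fin.last (n+1) ∨ ∃ u, α.SameCycle 0 u ∧ w = u.castSucc := by
  intro w hw
  refine sc_closed (P := fun w => w = Fin.last (n+1) ∨ ∃ u, α.SameCycle 0 u ∧ w = u.castSucc)
    ?_ hw (Or.inl rfl)
  rintro x (rfl | ⟨u, hu, rfl⟩)
  · rw [insN_last]
    exact Or.inr ⟨α 0, scR α 0, rfl⟩
  · rcases eq_or_ne u 0 with rfl | hu0
    · rw [Fin.castSucc_zero, insN_zero]
      exact Or.inl rfl
    · rw [insN_mid α hu0]
      exact Or.inr ⟨α u, hu.trans (scR α u), rfl⟩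

lemma cloN_other {x : Fin (n+1)} (hx : ¬ α.SameCycle 0 x) :
    ∀ w, (insPerm α none).SameCycle x.castSucc w →
      ∃ u, α.SameCycle x u ∧ w = u.castSucc := by
  intro w hw
  refine sc_closed (P := fun w => ∃ u, α.SameCycle x u ∧ w = u.castSucc)
    ?_ hw ⟨x, Equiv.Perm.SameCycle.refl _ _, rfl⟩
  rintro y ⟨u, hu, rfl⟩
  have hu0 : u ≠ 0 := by rintro rfl; exact hx hu.symm
  rw [insN_mid α hu0]
  exact ⟨α u, hu.trans (scR α u), rfl⟩

lemma cloS_bot (h1 : Star1 α) {j' : Fin (n+1)} (hj : α.SameCycle 0 j') :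
    ∀ w, (insPerm α (some j')).SameCycle 0 w →
      ∃ u, α.SameCycle 0 u ∧ u ≤ j' ∧ w = u.castSucc := by
  intro w hw
  refine sc_closed (P := fun w => ∃ u, α.SameCycle 0 u ∧ u ≤ j' ∧ w = u.castSucc)
    ?_ hw ⟨0, Equiv.Perm.SameCycle.refl _ _, Fin.zero_le _, (Fin.castSucc_zero).symm⟩
  rintro y ⟨u, hu, huj, rfl⟩
  rcases eq_or_ne u 0 with rfl | hu0
  · rw [Fin.castSucc_zero, insS_zero]
    exact ⟨j', hj, le_refl _, rfl⟩
  · have hdesc : α u < u := sc0_desc h1 hu hu0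
    have hne : α u ≠ j' := fun h => absurd (lt_of_lt_of_le hdesc huj) (by rw [h]; exact lt_irrefl _)
    rw [insS_mid α hu0 hne]
    exact ⟨α u, hu.trans (scR α u), le_trans hdesc.le huj, rfl⟩

lemma cloS_top (h1 : Star1 α) {j' : Fin (n+1)} (hj : α.SameCycle 0 j') :
    ∀ w, (insPerm α (some j')).SameCycle (Fin.last (n+1)) w →
      w = Fin.last (n+1) ∨ ∃ u, α.SameCycle 0 u ∧ j' < u ∧ w = u.castSucc := by
  intro w hw
  refine sc_closed
    (P := fun w => w = Fin.last (n+1) ∨ ∃ u, α.SameCycle 0 u ∧ j' < u ∧ w = u.castSucc)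
    ?_ hw (Or.inl rfl)
  rintro y (rfl | ⟨u, hu, hju, rfl⟩)
  · rcases eq_or_ne (α 0) j' with heq | hne
    · rw [insS_last_eq α heq]; exact Or.inl rfl
    · rw [insS_last_ne α hne]
      exact Or.inr ⟨α 0, scR α 0, lt_of_le_of_ne (alpha0_max h1 hj) (Ne.symm hne), rfl⟩
  · have hu0 : u ≠ 0 := by rintro rfl; exact absurd hju (Fin.not_lt.mpr (Fin.zero_le _))
    rcases eq_or_ne (α u) j' with heq | hne
    · rw [insS_hit α hu0 heq]; exact Or.inl rfl
    · rw [insS_mid α hu0 hne]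
      refine Or.inr ⟨α u, hu.trans (scR α u), ?_, rfl⟩
      rcases lt_or_ge j' (α u) with h | h
      · exact h
      · exact absurd (no_skip h1 (hu.symm.trans hj) (lt_of_le_of_ne h hne) hju) not_false
    
lemma cloS_other {j' x : Fin (n+1)} (hj : α.SameCycle 0 j') (hx : ¬ α.SameCycle 0 x) :
    ∀ w, (insPerm α (some j')).SameCycle x.castSucc w →
      ∃ u, α.SameCycle x u ∧ w = u.castSucc := by
  intro w hw
  refine sc_closed (P := fun w => ∃ u, α.SameCycle x u ∧ w = u.castSucc)
    ?_ hw ⟨x, Equiv.Perm.SameCycle.refl _ _, rfl⟩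
  rintro y ⟨u, hu, rfl⟩
  have hu0 : u ≠ 0 := by rintro rfl; exact hx hu.symm
  have hne : α u ≠ j' := by
    intro h
    have h2 : α.SameCycle x j' := by rw [← h]; exact hu.trans (scR α u)
    exact hx (hj.trans h2.symm)
  rw [insS_mid α hu0 hne]
  exact ⟨α u, hu.trans (scR α u), rfl⟩

end Closures

section CrossAux
variable {n : ℕ}

lemma cr_aux {A B : Set (Fin (n+1))} {A' B' : Set (Fin (n+2))}
    (hA : ∀ w ∈ A', ∃ u ∈ A, w = u.castSucc)
    (hB : ∀ w ∈ B', w = Fin.last (n+1) ∨ ∃ u ∈ B, w = u.castSucc)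
    (h0B : (0:Fin (n+1)) ∈ B) (h0A : (0:Fin (n+1)) ∉ A)
    (hncAB : ¬ Crossing A B) (hncBA : ¬ Crossing B A) :
    ¬ Crossing A' B' := by
  rintro ⟨a, b, c, d, hab, hbc, hcd, haA, hcA, hbB, hdB⟩
  obtain ⟨a0, ha0, rfl⟩ := hA a haA
  obtain ⟨c0, hc0, rfl⟩ := hA c hcA
  obtain rfl | ⟨b0, hb0, rfl⟩ := hB b hbB
  · exact absurd (hbc.trans (Fin.castSucc_lt_last c0)) (lt_irrefl _)
  · obtain rfl | ⟨d0, hd0, rfl⟩ := hB d hdB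
    · apply hncBA
      refine ⟨0, a0, b0, c0, ?_, ?_, ?_, h0B, hb0, ha0, hc0⟩
      · exact lt_of_le_of_ne (Fin.zero_le _) (fun h => h0A (h ▸ ha0))
      · exact Fin.castSucc_lt_castSucc_iff.mp hab
      · exact Fin.castSucc_lt_castSucc_iff.mp hbc
    · exact hncAB ⟨a0, b0, c0, d0, Fin.castSucc_lt_castSucc_iff.mp hab,
        Fin.castSucc_lt_castSucc_iff.mp hbc, Fin.castSucc_lt_castSucc_iff.mp hcd,
        ha0, hc0, hb0, hd0⟩

lemma cr_aux2 {A B : Set (Fin (n+1))} {A' B' : Set (Fin (n+2))}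
    (hA : ∀ w ∈ A', w = Fin.last (n+1) ∨ ∃ u ∈ A, w = u.castSucc)
    (hB : ∀ w ∈ B', ∃ u ∈ B, w = u.castSucc)
    (hnc : ¬ Crossing A B) : ¬ Crossing A' B' := by
  rintro ⟨a, b, c, d, hab, hbc, hcd, haA, hcA, hbB, hdB⟩
  obtain ⟨b0, hb0, rfl⟩ := hB b hbB
  obtain ⟨d0, hd0, rfl⟩ := hB d hdB
  obtain rfl | ⟨a0, ha0, rfl⟩ := hA a haA
  · exact absurd (hab.trans (Fin.castSucc_lt_last b0)) (lt_irrefl _)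
  · obtain rfl | ⟨c0, hc0, rfl⟩ := hA c hcA
    · exact absurd (hcd.trans (Fin.castSucc_lt_last d0)) (lt_irrefl _)
    · exact hnc ⟨a0, b0, c0, d0, Fin.castSucc_lt_castSucc_iff.mp hab,
        Fin.castSucc_lt_castSucc_iff.mp hbc, Fin.castSucc_lt_castSucc_iff.mp hcd,
        ha0, hc0, hb0, hd0⟩

lemma cr_bt {j' : Fin (n+1)} {S T : Set (Fin (n+2))}
    (hS : ∀ w ∈ S, ∃ u : Fin (n+1), u ≤ j' ∧ w = u.castSucc)
    (hT : ∀ w ∈ T, w = Fin.last (n+1) ∨ ∃ u : Fin (n+1), j' < u ∧ w = u.castSucc) :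
    ¬ Crossing S T := by
  rintro ⟨a, b, c, d, hab, hbc, hcd, haA, hcA, hbB, hdB⟩
  obtain ⟨c0, hc0, rfl⟩ := hS c hcA
  obtain rfl | ⟨b0, hb0, rfl⟩ := hT b hbB
  · exact absurd (hbc.trans (Fin.castSucc_lt_last c0)) (lt_irrefl _)
  · have : b0 < c0 := Fin.castSucc_lt_castSucc_iff.mp hbc
    exact absurd (lt_trans hb0 this) (Fin.not_lt.mpr hc0)

lemma cr_tb {j' : Fin (n+1)} {S T : Set (Fin (n+2))}
    (hS : ∀ w ∈ S, ∃ u : Fin (n+1), u ≤ j' ∧ w = u.castSucc)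
    (hT : ∀ w ∈ T, w = Fin.last (n+1) ∨ ∃ u : Fin (n+1), j' < u ∧ w = u.castSucc) :
    ¬ Crossing T S := by
  rintro ⟨a, b, c, d, hab, hbc, hcd, haA, hcA, hbB, hdB⟩
  obtain ⟨b0, hb0, rfl⟩ := hS b hbB
  obtain rfl | ⟨a0, ha0, rfl⟩ := hT a haA
  · exact absurd (hab.trans (Fin.castSucc_lt_last b0)) (lt_irrefl _)
  · have : a0 < b0 := Fin.castSucc_lt_castSucc_iff.mp hab
    exact absurd (lt_trans ha0 this) (Fin.not_lt.mpr hb0)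

end CrossAux

section Main
variable {n : ℕ} {α : Equiv.Perm (Fin (n+1))}

lemma orbit_eq {N : ℕ} {β : Perm (Fin N)} {a b : Fin N} (hab : β.SameCycle a b) :
    {z | β.SameCycle a z} = {z | β.SameCycle b z} := by
  ext z
  exact ⟨fun h => hab.symm.trans h, fun h => hab.trans h⟩

lemma conn_other {β : Equiv.Perm (Fin (n+2))} (hα1 : Star1 α) {x y : Fin (n+1)}
    (hstep : ∀ u, α.SameCycle x u → β u.castSucc = (α u).castSucc)
    (hxy : α.SameCycle x y) :
    β.SameCycle x.castSucc y.castSucc := by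
  obtain ⟨M, hxM, hM⟩ := orbit_min α x
  have conn := conn_rec (α := α) (β := β) (M := M) (R := fun u => α.SameCycle M u) ?_
  · exact (conn x hxM.symm).symm.trans (conn y (hxM.symm.trans hxy))
  · intro u hu huM
    refine ⟨hu.trans (scR α u), star1_min hα1 hu.symm (lt_of_le_of_ne (hM u hu) (Ne.symm huM)),
      hstep u (hxM.trans hu)⟩

-- connectivity for the chain in the `none` case
lemma connN_chain (hα1 : Star1 α) {u : Fin (n+1)} (hu : α.SameCycle 0 u) :
    (insPerm α none).SameCycle (Fin.last (n+1)) u.castSucc := by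
  have conn := conn_rec (α := α) (β := insPerm α none) (M := 0)
    (R := fun u => α.SameCycle 0 u) ?_
  · have h0 : (insPerm α none).SameCycle 0 (Fin.last (n+1)) := by
      have := scR (insPerm α none) 0
      rwa [insN_zero] at this
    have := conn u hu
    rw [Fin.castSucc_zero] at this
    exact h0.symm.trans this
  · intro u hu hu0
    exact ⟨hu.trans (scR α u), sc0_desc hα1 hu hu0, insN_mid α hu0⟩

lemma connN_other (hα1 : Star1 α) {x y : Fin (n+1)} (hx : ¬ α.SameCycle 0 x)
    (hxy : α.SameCycle x y) :
    (insPerm α none).SameCycle x.castSucc y.castSucc := by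
  refine conn_other hα1 (fun u hu => ?_) hxy
  have hu0 : u ≠ 0 := by rintro rfl; exact hx hu.symm
  exact insN_mid α hu0

lemma prop_none (hα1 : Star1 α)
    (hα2 : ∀ x y : Fin (n+1), ¬ α.SameCycle x y →
      ¬ Crossing {z | α.SameCycle x z} {z | α.SameCycle y z}) :
    Star1 (insPerm α none) ∧ ∀ X Y : Fin (n+2), ¬ (insPerm α none).SameCycle X Y →
      ¬ Crossing {z | (insPerm α none).SameCycle X z} {z | (insPerm α none).SameCycle Y z} := by
  set β := insPerm α none with hβ
  constructor
  · -- Star1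
    intro I K hasc hscIK
    rcases eq_or_ne I (Fin.last (n+1)) with rfl | hIl
    · rw [hβ, insN_last] at hasc
      exact absurd (hasc.trans (Fin.castSucc_lt_last _)) (lt_irrefl _)
    · obtain ⟨x, rfl⟩ := Fin.eq_castSucc_of_ne_last hIl
      rcases eq_or_ne x 0 with rfl | hx0
      · rw [Fin.castSucc_zero]
        exact Fin.zero_le _
      · rw [hβ, insN_mid α hx0] at hasc
        have hax : x < α x := Fin.castSucc_lt_castSucc_iff.mp hasc
        have hx : ¬ α.SameCycle 0 x := by
          intro h
          exact hx0 (le_antisymm (hα1 x 0 hax h.symm) (Fin.zero_le _))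
        obtain ⟨u, hxu, rfl⟩ := cloN_other hx K hscIK
        exact Fin.castSucc_le_castSucc_iff.mpr (hα1 x u hax hxu)
  · -- noncrossing
    have orbDesc : ∀ X : Fin (n+2), β.SameCycle (Fin.last (n+1)) X ∨
        ∃ x, ¬ α.SameCycle 0 x ∧ X = x.castSucc := by
      intro X
      rcases eq_or_ne X (Fin.last (n+1)) with rfl | hXl
      · exact Or.inl (Equiv.Perm.SameCycle.refl _ _)
      · obtain ⟨x, rfl⟩ := Fin.eq_castSucc_of_ne_last hXl
        by_cases hx : α.SameCycle 0 x
        · exact Or.inl (connN_chain hα1 hx)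
        · exact Or.inr ⟨x, hx, rfl⟩
    intro X Y hXY
    rcases orbDesc X with hX | ⟨x, hx, rfl⟩
    · rcases orbDesc Y with hY | ⟨y, hy, rfl⟩
      · exact absurd (hX.symm.trans hY) hXY
      · rw [orbit_eq hX.symm]
        refine cr_aux2 (A := {u | α.SameCycle 0 u}) (B := {u | α.SameCycle y u})
          (fun w hw => ?_) (fun w hw => ?_) (hα2 0 y hy)
        · exact cloN_chain hα1 w hw
        · exact (cloN_other hy w hw).imp (fun u h => ⟨h.1, h.2⟩)
    · rcases orbDesc Y with hY | ⟨y, hy, rfl⟩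
      · rw [orbit_eq hY.symm]
        refine cr_aux (A := {u | α.SameCycle x u}) (B := {u | α.SameCycle 0 u})
          (fun w hw => ?_) (fun w hw => ?_) (Equiv.Perm.SameCycle.refl _ _)
          (fun h => hx h.symm) (hα2 x 0 (fun h => hx h.symm)) (hα2 0 x hx)
        · exact (cloN_other hx w hw).imp (fun u h => ⟨h.1, h.2⟩)
        · exact cloN_chain hα1 w hw
      · have hxy : ¬ α.SameCycle x y := by
          intro h
          exact hXY (connN_other hα1 hx h)
        refine cr_aux2 (A := {u | α.SameCycle x u}) (B := {u | α.SameCycle y u})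
          (fun w hw => Or.inr ((cloN_other hx w hw).imp (fun u h => ⟨h.1, h.2⟩)))
          (fun w hw => (cloN_other hy w hw).imp (fun u h => ⟨h.1, h.2⟩)) (hα2 x y hxy)

-- connectivity for the bottom in the `some` case
lemma connS_bot (hα1 : Star1 α) {j' : Fin (n+1)} (hj : α.SameCycle 0 j') {u : Fin (n+1)}
    (hu : α.SameCycle 0 u) (huj : u ≤ j') :
    (insPerm α (some j')).SameCycle 0 u.castSucc := by
  have conn := conn_rec (α := α) (β := insPerm α (some j')) (M := 0)
    (R := fun u => α.SameCycle 0 u ∧ u ≤ j') ?_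
  · have := conn u ⟨hu, huj⟩
    rwa [Fin.castSucc_zero] at this
  · rintro v ⟨hv, hvj⟩ hv0
    have hdesc : α v < v := sc0_desc hα1 hv hv0
    have hne : α v ≠ j' :=
      fun h => absurd (lt_of_lt_of_le hdesc hvj) (by rw [h]; exact lt_irrefl _)
    exact ⟨⟨hv.trans (scR α v), le_trans hdesc.le hvj⟩, hdesc, insS_mid α hv0 hne⟩

lemma connS_other (hα1 : Star1 α) {j' x y : Fin (n+1)} (hj : α.SameCycle 0 j')
    (hx : ¬ α.SameCycle 0 x) (hxy : α.SameCycle x y) :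
    (insPerm α (some j')).SameCycle x.castSucc y.castSucc := by
  refine conn_other hα1 (fun u hu => ?_) hxy
  have hu0 : u ≠ 0 := by rintro rfl; exact hx hu.symm
  have hne : α u ≠ j' := by
    intro h
    have h2 : α.SameCycle x j' := by rw [← h]; exact hu.trans (scR α u)
    exact hx (hj.trans h2.symm)
  exact insS_mid α hu0 hne

lemma prop_some (hα1 : Star1 α)
    (hα2 : ∀ x y : Fin (n+1), ¬ α.SameCycle x y →
      ¬ Crossing {z | α.SameCycle x z} {z | α.SameCycle y z})
    {j' : Fin (n+1)} (hj : α.SameCycle 0 j') :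
    Star1 (insPerm α (some j')) ∧ ∀ X Y : Fin (n+2), ¬ (insPerm α (some j')).SameCycle X Y →
      ¬ Crossing {z | (insPerm α (some j')).SameCycle X z}
        {z | (insPerm α (some j')).SameCycle Y z} := by
  set β := insPerm α (some j') with hβ
  constructor
  · -- Star1
    intro I K hasc hscIK
    rcases eq_or_ne I (Fin.last (n+1)) with rfl | hIl
    · exfalso
      rcases eq_or_ne (α 0) j' with heq | hne
      · rw [hβ, insS_last_eq α heq] at hasc; exact lt_irrefl _ hasc
      · rw [hβ, insS_last_ne α hne] at hasc
        exact absurd (hasc.trans (Fin.castSucc_lt_last _)) (lt_irrefl _)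
    · obtain ⟨x, rfl⟩ := Fin.eq_castSucc_of_ne_last hIl
      rcases eq_or_ne x 0 with rfl | hx0
      · rw [Fin.castSucc_zero]
        exact Fin.zero_le _
      · rcases eq_or_ne (α x) j' with heq | hne
        · -- x = α⁻¹ j' : the unique ascent into the top part
          have hscx : α.SameCycle 0 x := by
            have : α.SameCycle x j' := by rw [← heq]; exact scR α x
            exact hj.trans this.symm
          have hjx : j' < x := by
            have := sc0_desc hα1 hscx hx0
            rwa [heq] at this
          have htopx : β.SameCycle (Fin.last (n+1)) x.castSucc := conn_top hα1 hj x hscx hjx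
          have hscK : β.SameCycle (Fin.last (n+1)) K := htopx.trans hscIK
          rcases cloS_top hα1 hj K hscK with rfl | ⟨u, hu, hju, rfl⟩
          · exact Fin.le_last _
          · refine Fin.castSucc_le_castSucc_iff.mpr (le_of_not_gt fun hlt => ?_)
            exact no_skip hα1 (hscx.symm.trans hu) (heq ▸ hju) hlt
        · rw [hβ, insS_mid α hx0 hne] at hasc
          have hax : x < α x := Fin.castSucc_lt_castSucc_iff.mp hasc
          have hx : ¬ α.SameCycle 0 x := by
            intro h
            exact hx0 (le_antisymm (hα1 x 0 hax h.symm) (Fin.zero_le _))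
          obtain ⟨u, hxu, rfl⟩ := cloS_other hj hx K hscIK
          exact Fin.castSucc_le_castSucc_iff.mpr (hα1 x u hax hxu)
  · -- noncrossing
    have orbDesc : ∀ X : Fin (n+2), β.SameCycle 0 X ∨ β.SameCycle (Fin.last (n+1)) X ∨
        ∃ x, ¬ α.SameCycle 0 x ∧ X = x.castSucc := by
      intro X
      rcases eq_or_ne X (Fin.last (n+1)) with rfl | hXl
      · exact Or.inr (Or.inl (Equiv.Perm.SameCycle.refl _ _))
      · obtain ⟨x, rfl⟩ := Fin.eq_castSucc_of_ne_last hXl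
        by_cases hx : α.SameCycle 0 x
        · rcases le_or_gt x j' with hle | hlt
          · exact Or.inl (connS_bot hα1 hj hx hle)
          · exact Or.inr (Or.inl (conn_top hα1 hj x hx hlt))
        · exact Or.inr (Or.inr ⟨x, hx, rfl⟩)
    -- descriptions of the two special orbits, weakened for crossing arguments
    have descBot : ∀ w ∈ {z | β.SameCycle 0 z},
        ∃ u ∈ {u : Fin (n+1) | α.SameCycle 0 u}, w = u.castSucc :=
      fun w hw => (cloS_bot hα1 hj w hw).imp (fun u h => ⟨h.1, h.2.2⟩)
    have descBot' : ∀ w ∈ {z | β.SameCycle 0 z},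
        ∃ u : Fin (n+1), u ≤ j' ∧ w = u.castSucc :=
      fun w hw => (cloS_bot hα1 hj w hw).imp (fun u h => ⟨h.2.1, h.2.2⟩)
    have descTop : ∀ w ∈ {z | β.SameCycle (Fin.last (n+1)) z},
        w = Fin.last (n+1) ∨ ∃ u ∈ {u : Fin (n+1) | α.SameCycle 0 u}, w = u.castSucc :=
      fun w hw => (cloS_top hα1 hj w hw).imp id (fun h => h.imp (fun u h' => ⟨h'.1, h'.2.2⟩))
    have descTop' : ∀ w ∈ {z | β.SameCycle (Fin.last (n+1)) z},
        w = Fin.last (n+1) ∨ ∃ u : Fin (n+1), j' < u ∧ w = u.castSucc :=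
      fun w hw => (cloS_top hα1 hj w hw).imp id (fun h => h.imp (fun u h' => ⟨h'.2.1, h'.2.2⟩))
    intro X Y hXY
    rcases orbDesc X with hX | hX | ⟨x, hx, rfl⟩
    · rcases orbDesc Y with hY | hY | ⟨y, hy, rfl⟩
      · exact absurd (hX.symm.trans hY) hXY
      · rw [orbit_eq hX.symm, orbit_eq hY.symm]
        exact cr_bt descBot' descTop'
      · rw [orbit_eq hX.symm]
        exact cr_aux2 (fun w hw => Or.inr (descBot w hw))
          (fun w hw => (cloS_other hj hy w hw).imp (fun u h => ⟨h.1, h.2⟩)) (hα2 0 y hy)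
    · rcases orbDesc Y with hY | hY | ⟨y, hy, rfl⟩
      · rw [orbit_eq hX.symm, orbit_eq hY.symm]
        exact cr_tb descBot' descTop'
      · exact absurd (hX.symm.trans hY) hXY
      · rw [orbit_eq hX.symm]
        exact cr_aux2 descTop
          (fun w hw => (cloS_other hj hy w hw).imp (fun u h => ⟨h.1, h.2⟩)) (hα2 0 y hy)
    · rcases orbDesc Y with hY | hY | ⟨y, hy, rfl⟩
      · rw [orbit_eq hY.symm]
        exact cr_aux (fun w hw => (cloS_other hj hx w hw).imp (fun u h => ⟨h.1, h.2⟩))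
          (fun w hw => Or.inr (descBot w hw)) (Equiv.Perm.SameCycle.refl _ _)
          (fun h => hx h.symm) (hα2 x 0 (fun h => hx h.symm)) (hα2 0 x hx)
      · rw [orbit_eq hY.symm]
        exact cr_aux (fun w hw => (cloS_other hj hx w hw).imp (fun u h => ⟨h.1, h.2⟩))
          descTop (Equiv.Perm.SameCycle.refl _ _)
          (fun h => hx h.symm) (hα2 x 0 (fun h => hx h.symm)) (hα2 0 x hx)
      · have hxy : ¬ α.SameCycle x y := by
          intro h
          exact hXY (connS_other hα1 hj hx h)
        exact cr_aux2
          (fun w hw => Or.inr ((cloS_other hj hx w hw).imp (fun u h => ⟨h.1, h.2⟩)))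
          (fun w hw => (cloS_other hj hy w hw).imp (fun u h => ⟨h.1, h.2⟩)) (hα2 x y hxy)

lemma connOut {j' : Fin (n+1)} (hj : ¬ α.SameCycle 0 j') {u : Fin (n+1)}
    (hu : α.SameCycle j' u) :
    (insPerm α (some j')).SameCycle j'.castSucc u.castSucc := by
  set β := insPerm α (some j') with hβ
  refine sc_closed (β := α)
    (P := fun v => α.SameCycle j' v → β.SameCycle j'.castSucc v.castSucc) ?_ hu
    (fun _ => Equiv.Perm.SameCycle.refl _ _) hu
  intro v hPv hsc
  have hscv : α.SameCycle j' v := by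
    have := Equiv.Perm.sameCycle_apply_right.mp hsc
    exact this
  have hbase := hPv hscv
  have hv0 : v ≠ 0 := by rintro rfl; exact hj hscv.symm
  rcases eq_or_ne (α v) j' with heq | hne
  · rw [heq]
  · have hstep : β v.castSucc = (α v).castSucc := insS_mid α hv0 hne
    refine hbase.trans ?_
    rw [← hstep]
    exact scR β v.castSucc

lemma prop_out {j' : Fin (n+1)} (hj : ¬ α.SameCycle 0 j') :
    ¬ Star1 (insPerm α (some j')) := by
  intro hS
  set β := insPerm α (some j') with hβ
  set z := α⁻¹ j' with hz
  have hz0 : z ≠ 0 := by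
    intro h
    apply hj
    have : α z = j' := by rw [hz]; exact α.apply_symm_apply j'
    rw [h] at this
    rw [← this]
    exact scR α 0
  have hzc : α.SameCycle j' z := Equiv.Perm.sameCycle_symm_apply_right.mpr
    (Equiv.Perm.SameCycle.refl _ _)
  have hstep : β z.castSucc = Fin.last (n+1) := insS_hit α hz0 (α.apply_symm_apply j')
  have hasc : z.castSucc < β z.castSucc := by rw [hstep]; exact Fin.castSucc_lt_last _
  have hsc1 : β.SameCycle 0 j'.castSucc := by
    have := scR β 0
    rwa [hβ, insS_zero] at this
  have hsc : β.SameCycle z.castSucc 0 := ((hsc1.trans (connOut hj hzc)).symm)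
  have := hS z.castSucc 0 hasc hsc
  have hz00 : z.castSucc = 0 := le_antisymm this (Fin.zero_le _)
  exact hz0 (by simpa using hz00)

end Main

/-- Let `α` satisfy condition (*) and `β = [α, j]`.  Then `β` satisfies condition (*)
iff `j = 0` (here `j = none`) or `j` is a vertex of the chain of `Q̂_α`, i.e. `j` lies
in the cycle of `α` containing the distinguished element (here `0`). -/
theorem insPerm_star_iff (n : ℕ) (α : Equiv.Perm (Fin (n + 1))) (hα : SatisfiesStar α)
    (j : Option (Fin (n + 1))) :
    SatisfiesStar (insPerm α j) ↔
      (j = none ∨ ∃ j', j = some j' ∧ α.SameCycle 0 j') := by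
  rw [star_iff] at hα
  obtain ⟨hα1, hα2⟩ := hα
  rw [star_iff]
  constructor
  · intro hβ
    match j with
    | none => exact Or.inl rfl
    | some j' =>
      refine Or.inr ⟨j', rfl, ?_⟩
      by_contra hj
      exact prop_out hj hβ.1
  · rintro (rfl | ⟨j', rfl, hj⟩)
    · exact prop_none hα1 hα2
    · exact prop_some hα1 hα2 hj
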